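/- Let t be a nontrivial finite rooted planar binary tree and define t_1 = t and t_{n+1} = t_n ∘ f_n where f_n attaches a copy of t to every leaf of t_n. Then for every finite rooted planar binary tree s there exists n with s ≤ t_n (s is a rooted subtree of t_n); i.e. the sequence (t_n) is cofinal in the poset of monochromatic binary trees ordered by rooted-subtree inclusion. -/

import Mathlib

namespace ForestSkein

/-- A coloured finite rooted planar binary tree with colours in `S`. -/
inductive CTree (S : Type) : Type
  | leaf : CTree S
  | node : S → CTree S → CTree S → CTree S

namespace CTree

/-- Number of leaves of a coloured binary tree. -/
def leaves {S : Type} : CTree S → ℕ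
  | .leaf => 1
  | .node _ l r => leaves l + leaves r

/-- Graft a list of trees onto the leaves of a tree (vertical stacking). -/
def graft {S : Type} : CTree S → List (CTree S) → CTree S
  | .leaf, gs => gs.headD .leaf
  | .node c l r, gs => .node c (graft l (gs.take (leaves l))) (graft r (gs.drop (leaves l)))

/-- Relabel the colours of a tree along a map of colour sets. -/
def recolour {S S' : Type} (c : S → S') : CTree S → CTree S'
  | .leaf => .leaf
  | .node x l r => .node (c x) (recolour c l) (recolour c r)

end CTree

/-- A coloured forest: a finite list of coloured binary trees.  Its roots are the
entries of the list, its leaves are the leaves of its trees. -/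
abbrev Forest (S : Type) := List (CTree S)

/-- Total number of leaves of a forest. -/
def Forest.leaves {S : Type} (f : Forest S) : ℕ := (f.map CTree.leaves).sum

/-- Composition of forests: `Forest.comp f g` stacks `g` on top of `f`, attaching
the `j`-th root of `g` to the `j`-th leaf of `f` (meaningful when
`Forest.leaves f = g.length`). -/
def Forest.comp {S : Type} : Forest S → Forest S → Forest S
  | [], _ => []
  | t :: ts, g =>
      CTree.graft t (g.take (CTree.leaves t)) :: Forest.comp ts (g.drop (CTree.leaves t))

/-- The elementary forest `a_{j,n}` (1-indexed) with `n` roots, a single `a`-coloured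
caret at the `j`-th root, and all other trees trivial. -/
def elemForest {S : Type} (a : S) (j n : ℕ) : Forest S :=
  List.replicate (j - 1) CTree.leaf ++ [CTree.node a CTree.leaf CTree.leaf] ++
    List.replicate (n - j) CTree.leaf

/-- A set of skein relations consists of pairs of trees with equal numbers of leaves. -/
def LeafPres {S : Type} (R : CTree S → CTree S → Prop) : Prop :=
  ∀ t t' : CTree S, R t t' → CTree.leaves t = CTree.leaves t'

/-- The equivalence relation on coloured forests generated by a set `R` of skein
relations (pairs of trees), closed under composition and tensor product
(horizontal juxtaposition).  The quotient is the forest-skein category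
presented by `R`. -/
inductive SkeinEquiv {S : Type} (R : CTree S → CTree S → Prop) : Forest S → Forest S → Prop
  | of {t t' : CTree S} : R t t' → SkeinEquiv R [t] [t']
  | refl (f : Forest S) : SkeinEquiv R f f
  | symm {f g : Forest S} : SkeinEquiv R f g → SkeinEquiv R g f
  | trans {f g h : Forest S} : SkeinEquiv R f g → SkeinEquiv R g h → SkeinEquiv R f h
  | comp {f f' g g' : Forest S} :
      SkeinEquiv R f f' → SkeinEquiv R g g' → SkeinEquiv R (Forest.comp f g) (Forest.comp f' g')
  | tensor {f f' g g' : Forest S} :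
      SkeinEquiv R f f' → SkeinEquiv R g g' → SkeinEquiv R (f ++ g) (f' ++ g')

/-- Left-cancellativity of a forest-skein category given by the equivalence `E` on
forests: `f ∘ g = f ∘ h` implies `g = h`. -/
def LeftCancel {S : Type} (E : Forest S → Forest S → Prop) : Prop :=
  ∀ f g h : Forest S, Forest.leaves f = g.length → Forest.leaves f = h.length →
    E (Forest.comp f g) (Forest.comp f h) → E g h

/-- Ore's property for the forest-skein category given by the equivalence `E`:
any two forests with the same number of roots admit a common right multiple. -/
def OreProp {S : Type} (E : Forest S → Forest S → Prop) : Prop :=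
  ∀ f g : Forest S, f.length = g.length →
    ∃ p q : Forest S, Forest.leaves f = p.length ∧ Forest.leaves g = q.length ∧
      E (Forest.comp f p) (Forest.comp g q)

/-- Equality of the fractions `t ∘ s⁻¹` and `t' ∘ s'⁻¹` in the fraction group:
there are forests `f, f'` with `t ∘ f = t' ∘ f'` and `s ∘ f = s' ∘ f'` modulo `E`. -/
def FracRel {S : Type} (E : Forest S → Forest S → Prop) (t s t' s' : CTree S) : Prop :=
  ∃ f f' : Forest S, CTree.leaves t = f.length ∧ CTree.leaves t' = f'.length ∧
    E [CTree.graft t f] [CTree.graft t' f'] ∧ E [CTree.graft s f] [CTree.graft s' f']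

/-- `titer t n` is the tree `t_{n+1}`: `t_1 = t` and `t_{n+1}` is obtained by
attaching a copy of `t` to every leaf of `t_n`. -/
def titer {S : Type} (t : CTree S) : ℕ → CTree S
  | 0 => t
  | n + 1 => CTree.graft (titer t n) (List.replicate (CTree.leaves (titer t n)) t)

/-- Auxiliary: rooted-subtree embedding for monochromatic trees. -/
inductive Emb : CTree Unit → CTree Unit → Prop
  | leaf (z : CTree Unit) : Emb .leaf z
  | node {l r l' r' : CTree Unit} (c c' : Unit) :
      Emb l l' → Emb r r' → Emb (.node c l r) (.node c' l' r')

/-- Add a caret at the `j`-th leaf (0-indexed, clamped). -/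
def addCaret : ℕ → CTree Unit → CTree Unit
  | _, .leaf => .node () .leaf .leaf
  | j, .node c l r =>
      if j < l.leaves then .node c (addCaret j l) r
      else .node c l (addCaret (j - l.leaves) r)

/-- Number of carets (internal nodes). -/
def carets : CTree Unit → ℕ
  | .leaf => 0
  | .node _ l r => carets l + carets r + 1

theorem Emb.rfl : ∀ x : CTree Unit, Emb x x
  | .leaf => Emb.leaf _
  | .node c l r => Emb.node c c (Emb.rfl l) (Emb.rfl r)

theorem Emb.graft {x y : CTree Unit} (h : Emb x y) :
    ∀ f : Forest Unit, Emb x (CTree.graft y f) := by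
  induction h with
  | leaf z => exact fun _ => Emb.leaf _
  | node c c' hl hr ihl ihr =>
      intro f
      exact Emb.node c c' (ihl _) (ihr _)

theorem carets_addCaret (j : ℕ) (s : CTree Unit) :
    carets (addCaret j s) = carets s + 1 := by
  induction s generalizing j with
  | leaf => rfl
  | node c l r ihl ihr =>
      simp only [addCaret]
      split <;> simp [carets, ihl, ihr] <;> omega

theorem decomp : ∀ s : CTree Unit, s ≠ .leaf →
    ∃ (j : ℕ) (s₀ : CTree Unit), j < s₀.leaves ∧ s = addCaret j s₀ := by
  intro s hs
  induction s with
  | leaf => exact absurd rfl hs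
  | node c l r ihl ihr =>
      obtain ⟨⟩ := c
      by_cases hl : l = .leaf
      · by_cases hr : r = .leaf
        · subst hl; subst hr
          exact ⟨0, .leaf, Nat.zero_lt_one, rfl⟩
        · obtain ⟨j, r₀, hj, hr₀⟩ := ihr hr
          refine ⟨j + 1, .node () .leaf r₀, ?_, ?_⟩
          · simp [CTree.leaves]; omega
          · subst hl
            simp only [addCaret, CTree.leaves]
            simp only [show ¬ (j + 1 < 1) by omega, if_false]
            simp [hr₀]
      · obtain ⟨j, l₀, hj, hl₀⟩ := ihl hl
        refine ⟨j, .node () l₀ r, ?_, ?_⟩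
        · simp [CTree.leaves]; omega
        · simp only [addCaret]
          rw [if_pos hj, ← hl₀]

theorem emb_caret {z : CTree Unit} (hz : z ≠ .leaf) :
    Emb (.node () .leaf .leaf) z := by
  cases z with
  | leaf => exact absurd rfl hz
  | node c l r => exact Emb.node _ _ (Emb.leaf _) (Emb.leaf _)

theorem graft_rep_ne_leaf {t : CTree Unit} (ht : t ≠ .leaf) (z : CTree Unit) :
    CTree.graft z (List.replicate z.leaves t) ≠ .leaf := by
  cases z with
  | leaf => simpa [CTree.graft, CTree.leaves] using ht
  | node c l r => simp [CTree.graft]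

theorem step {t : CTree Unit} (ht : t ≠ .leaf) :
    ∀ {s z : CTree Unit}, Emb s z → ∀ j : ℕ,
      Emb (addCaret j s) (CTree.graft z (List.replicate z.leaves t)) := by
  intro s z h
  induction h with
  | leaf z => exact fun j => emb_caret (graft_rep_ne_leaf ht z)
  | @node l r l' r' c c' hl hr ihl ihr =>
      intro j
      have htk : (List.replicate (CTree.leaves (CTree.node c' l' r')) t).take l'.leaves
          = List.replicate l'.leaves t := by
        simp [CTree.leaves, List.take_replicate]
      have hdr : (List.replicate (CTree.leaves (CTree.node c' l' r')) t).drop l'.leaves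
          = List.replicate r'.leaves t := by
        simp [CTree.leaves, List.drop_replicate]
      show Emb _ (CTree.node c' _ _)
      rw [htk, hdr]
      simp only [addCaret]
      split
      · exact Emb.node c c' (ihl j) ((hr.graft _))
      · exact Emb.node c c' (hl.graft _) (ihr _)

theorem emb_le : ∀ {x z : CTree Unit}, Emb x z →
    ∃ f : Forest Unit, x.leaves = f.length ∧ x.graft f = z := by
  intro x z h
  induction h with
  | leaf z => exact ⟨[z], rfl, rfl⟩
  | @node l r l' r' c c' hl hr ihl ihr =>
      obtain ⟨f₁, hf₁, hg₁⟩ := ihl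
      obtain ⟨f₂, hf₂, hg₂⟩ := ihr
      refine ⟨f₁ ++ f₂, by simp [CTree.leaves, hf₁, hf₂], ?_⟩
      obtain ⟨⟩ := c; obtain ⟨⟩ := c'
      show CTree.node () _ _ = _
      rw [hf₁, List.take_left, List.drop_left, hg₁, hg₂]

/-- for a nontrivial monochromatic binary tree `t`, the sequence
`(t_n)` is increasing and cofinal in the poset of monochromatic binary trees
ordered by rooted-subtree inclusion (`s ≤ z` iff `z = s ∘ f` for some forest `f`). -/
theorem titer_cofinal (t : CTree Unit) (ht : t ≠ CTree.leaf) :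
    (∀ n : ℕ, ∃ f : Forest Unit, CTree.leaves (titer t n) = f.length ∧
        CTree.graft (titer t n) f = titer t (n + 1))
    ∧ ∀ s : CTree Unit, ∃ (n : ℕ) (f : Forest Unit),
        CTree.leaves s = f.length ∧ CTree.graft s f = titer t n := by
  constructor
  · intro n
    exact ⟨List.replicate (CTree.leaves (titer t n)) t, List.length_replicate.symm, rfl⟩
  · have main : ∀ (k : ℕ) (s : CTree Unit), carets s ≤ k → ∃ n, Emb s (titer t n) := by
      intro k
      induction k with
      | zero =>
          intro s hs
          cases s with
          | leaf => exact ⟨0, Emb.leaf _⟩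
          | node c l r => simp [carets] at hs
      | succ k ih =>
          intro s hs
          by_cases hleaf : s = .leaf
          · subst hleaf; exact ⟨0, Emb.leaf _⟩
          · obtain ⟨j, s₀, hj, rfl⟩ := decomp s hleaf
            have hc : carets s₀ ≤ k := by
              have := carets_addCaret j s₀; omega
            obtain ⟨n, hn⟩ := ih s₀ hc
            exact ⟨n + 1, step ht hn j⟩
    intro s
    obtain ⟨n, hn⟩ := main (carets s) s le_rfl
    obtain ⟨f, hf, hg⟩ := emb_le hn
    exact ⟨n, f, hf, hg⟩

end ForestSkein
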